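/- Modifying the previous no-signaling behavior so that measurement A_1 deterministically outputs e ∈ ℤ_d while Bob's marginals are unchanged — i.e. setting p(a,b|1,y) := δ_{a,e}·(1/d) for all y and keeping all other distributions — yields a behavior whose chain Bell value equals Σ_{i=2}^{2m-1} α_0 + (1/d)Σ_{q∈ℤ_d} α_q + (1/d)Σ_{q∈ℤ_d} α_q, and this value does not exceed the classical bound I_{d,m}^C = max{ Σ_{i=1}^{2m} α_{q_i} : Σ_i q_i ≡ -1 (mod d) }. -/

import Mathlib

open scoped BigOperators

/-- The chain Bell value `I_{d,m}` of a behavior `p(a,b|x,y)` (inputs `0,...,m-1`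
standing for `1,...,m`), with the convention `A_{m+1} = A_1 + 1`:
`I = Σ_k α_k Σ_i [p(A_i - B_i = k) + p(B_i - A_{i+1} = k)]`, where
`p(A_x - B_y = k) = Σ_j p(j+k, j | x, y)` and the term for `i = m` uses inputs `(1,m)`
with shift `-k-1`. -/
noncomputable def chainValue (d m : ℕ) [NeZero d] [NeZero m] (α : ZMod d → ℝ)
    (p : Fin m → Fin m → ZMod d → ZMod d → ℝ) : ℝ :=
  ∑ k : ZMod d, α k * ∑ i : Fin m,
    ((∑ j : ZMod d, p i i (j + k) j) +
      (if i.val = m - 1 then ∑ j : ZMod d, p 0 i (j + (-k - 1)) j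
       else ∑ j : ZMod d, p (i + 1) i (j + (-k)) j))

/-- The classical (local) bound of the chain inequality:
`max { Σ_{i=1}^{2m} α_{q_i} : q ∈ ℤ_d^{2m}, Σ_i q_i ≡ -1 (mod d) }`. -/
noncomputable def classicalBound (d m : ℕ) [NeZero d] (α : ZMod d → ℝ) : ℝ :=
  sSup {S : ℝ | ∃ q : Fin (2 * m) → ZMod d, (∑ i, q i) = -1 ∧ S = ∑ i, α (q i)}

lemma sum_ite_const_aux {n : ℕ} [NeZero n] (a : Fin n) (x c : ℝ) :
    ∑ i : Fin n, (if i = a then x else c) = x + ((n - 1 : ℕ) : ℝ) * c := by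
  have h : ∀ i : Fin n, (if i = a then x else c) = c + (if i = a then x - c else 0) := by
    intro i; split <;> ring
  simp_rw [h]
  rw [Finset.sum_add_distrib, Finset.sum_const, Finset.sum_ite_eq' Finset.univ a]
  simp only [Finset.card_univ, Fintype.card_fin, Finset.mem_univ, if_true, nsmul_eq_mul]
  rw [Nat.cast_sub (Nat.one_le_iff_ne_zero.2 (NeZero.ne n))]
  push_cast; ring

lemma sum_shift_unique (d : ℕ) [NeZero d] (k e : ZMod d) (c : ℝ) :
    ∑ j : ZMod d, (if j + k = e then c else 0) = c := by
  have h : ∀ j : ZMod d, (j + k = e) ↔ (j = e - k) := fun j => eq_sub_iff_add_eq.symm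
  simp_rw [h]
  rw [Finset.sum_ite_eq' Finset.univ (e - k)]
  simp

lemma sum_shift_diag (d : ℕ) [NeZero d] (k : ZMod d) :
    ∑ j : ZMod d, (if j + k = j then (1 : ℝ) / d else 0) = if k = 0 then 1 else 0 := by
  have h : ∀ j : ZMod d, (j + k = j) ↔ (k = 0) := fun j => by
    rw [add_eq_left]
  simp_rw [h]
  by_cases hk : k = 0
  · simp only [hk, if_true, Finset.sum_const, Finset.card_univ, ZMod.card, nsmul_eq_mul]
    field_simp
    exact div_self (Nat.cast_ne_zero.2 (NeZero.ne d))
  · simp [hk]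

/-- making measurement `A_1` deterministically output `e` while keeping
Bob's marginals yields a behavior whose chain Bell value is
`(2m-2)·α_0 + (1/d)Σ_q α_q + (1/d)Σ_q α_q`, which does not exceed the classical bound. -/
theorem chain_construction_deterministic_A1
    (d m : ℕ) [NeZero d] [NeZero m] (hd : 2 ≤ d) (hm : 2 ≤ m)
    (α : ZMod d → ℝ) (e : ZMod d)
    (p : Fin m → Fin m → ZMod d → ZMod d → ℝ)
    (hp : p = fun x y a b =>
      if x = 0 then (if a = e then (1 : ℝ) / d else 0)
      else if x = y then (if a = b then (1 : ℝ) / d else 0)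
      else if x.val = y.val + 1 then (if a = b then (1 : ℝ) / d else 0)
      else 1 / (d ^ 2 : ℝ)) :
    chainValue d m α p =
        ((2 * m - 2 : ℕ) : ℝ) * α 0 +
          (1 / d) * (∑ q : ZMod d, α q) + (1 / d) * (∑ q : ZMod d, α q) ∧
      chainValue d m α p ≤ classicalBound d m α := by
  have hd0 : (d : ℝ) ≠ 0 := Nat.cast_ne_zero.2 (NeZero.ne d)
  -- the closed form of the chain value
  have hval : chainValue d m α p =
      ((2 * m - 2 : ℕ) : ℝ) * α 0 +
        (1 / d) * (∑ q : ZMod d, α q) + (1 / d) * (∑ q : ZMod d, α q) := by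
    subst hp
    unfold chainValue
    have hinner : ∀ k : ZMod d,
        (∑ i : Fin m,
          ((∑ j : ZMod d, (fun x y (a b : ZMod d) =>
              if x = 0 then (if a = e then (1 : ℝ) / d else 0)
              else if x = y then (if a = b then (1 : ℝ) / d else 0)
              else if x.val = y.val + 1 then (if a = b then (1 : ℝ) / d else 0)
              else 1 / (d ^ 2 : ℝ)) i i (j + k) j) +
            (if i.val = m - 1 then ∑ j : ZMod d, (fun x y (a b : ZMod d) =>
              if x = 0 then (if a = e then (1 : ℝ) / d else 0)
              else if x = y then (if a = b then (1 : ℝ) / d else 0)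
              else if x.val = y.val + 1 then (if a = b then (1 : ℝ) / d else 0)
              else 1 / (d ^ 2 : ℝ)) 0 i (j + (-k - 1)) j
             else ∑ j : ZMod d, (fun x y (a b : ZMod d) =>
              if x = 0 then (if a = e then (1 : ℝ) / d else 0)
              else if x = y then (if a = b then (1 : ℝ) / d else 0)
              else if x.val = y.val + 1 then (if a = b then (1 : ℝ) / d else 0)
              else 1 / (d ^ 2 : ℝ)) (i + 1) i (j + (-k)) j))) =
        2 / d + (if k = 0 then ((2 * m - 2 : ℕ) : ℝ) else 0) := by
      intro k
      have step : ∀ i : Fin m,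
          ((∑ j : ZMod d, (fun x y (a b : ZMod d) =>
              if x = 0 then (if a = e then (1 : ℝ) / d else 0)
              else if x = y then (if a = b then (1 : ℝ) / d else 0)
              else if x.val = y.val + 1 then (if a = b then (1 : ℝ) / d else 0)
              else 1 / (d ^ 2 : ℝ)) i i (j + k) j) +
            (if i.val = m - 1 then ∑ j : ZMod d, (fun x y (a b : ZMod d) =>
              if x = 0 then (if a = e then (1 : ℝ) / d else 0)
              else if x = y then (if a = b then (1 : ℝ) / d else 0)
              else if x.val = y.val + 1 then (if a = b then (1 : ℝ) / d else 0)
              else 1 / (d ^ 2 : ℝ)) 0 i (j + (-k - 1)) j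
             else ∑ j : ZMod d, (fun x y (a b : ZMod d) =>
              if x = 0 then (if a = e then (1 : ℝ) / d else 0)
              else if x = y then (if a = b then (1 : ℝ) / d else 0)
              else if x.val = y.val + 1 then (if a = b then (1 : ℝ) / d else 0)
              else 1 / (d ^ 2 : ℝ)) (i + 1) i (j + (-k)) j)) =
          (if i = 0 then (1 : ℝ) / d else (if k = 0 then 1 else 0)) +
          (if i.val = m - 1 then (1 : ℝ) / d else (if k = 0 then 1 else 0)) := by
        intro i
        congr 1
        · by_cases hi0 : i = 0
          · simp only [hi0, if_true]
            exact sum_shift_unique d k e (1 / d)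
          · simp only [hi0, if_false, if_true, if_pos rfl]
            exact sum_shift_diag d k
        · by_cases him : i.val = m - 1
          · simp only [him, if_true, if_pos rfl]
            exact sum_shift_unique d (-k - 1) e (1 / d)
          · have hlt : i.val + 1 < m := by omega
            have hv : (i + 1).val = i.val + 1 := by
              have h1m : (1 : ℕ) % m = 1 := Nat.mod_eq_of_lt (by omega)
              rw [Fin.val_add, Fin.val_one', h1m]
              exact Nat.mod_eq_of_lt hlt
            have h1 : (i + 1 : Fin m) ≠ 0 := by
              intro h; rw [Fin.ext_iff] at h; simp [hv] at h
            have h2 : (i + 1 : Fin m) ≠ i := by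
              intro h; rw [Fin.ext_iff] at h; omega
            simp only [him, if_false, h1, h2, hv, if_true, if_pos rfl]
            rw [sum_shift_diag d (-k)]
            simp [neg_eq_zero]
      rw [Finset.sum_congr rfl (fun i _ => step i), Finset.sum_add_distrib]
      have hb : m - 1 < m := by omega
      have hcond : ∀ i : Fin m, (i.val = m - 1) ↔ (i = ⟨m - 1, hb⟩) := by
        intro i; rw [Fin.ext_iff]
      simp_rw [hcond]
      rw [sum_ite_const_aux (0 : Fin m), sum_ite_const_aux (⟨m - 1, hb⟩ : Fin m)]
      by_cases hk : k = 0
      · simp only [hk, if_true, mul_one]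
        have : ((2 * m - 2 : ℕ) : ℝ) = ((m - 1 : ℕ) : ℝ) + ((m - 1 : ℕ) : ℝ) := by
          have h2m : (2 * m - 2 : ℕ) = (m - 1) + (m - 1) := by omega
          rw [h2m]; push_cast; ring
        rw [this]; ring
      · simp only [hk, if_false, mul_zero]
        ring
    rw [Finset.sum_congr rfl (fun k _ => by rw [hinner k])]
    simp_rw [mul_add, mul_ite, mul_zero]
    rw [Finset.sum_add_distrib, Finset.sum_ite_eq' Finset.univ (0 : ZMod d)
      (fun k => α k * ((2 * m - 2 : ℕ) : ℝ))]
    simp only [Finset.mem_univ, if_true]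
    rw [← Finset.sum_mul]
    ring
  refine ⟨hval, ?_⟩
  -- the bound
  set S := {S : ℝ | ∃ q : Fin (2 * m) → ZMod d, (∑ i, q i) = -1 ∧ S = ∑ i, α (q i)} with hS
  have hbdd : BddAbove S := by
    apply Set.Finite.bddAbove
    apply Set.Finite.subset (Set.finite_range (fun q : Fin (2 * m) → ZMod d => ∑ i, α (q i)))
    rintro x ⟨q, -, rfl⟩
    exact ⟨q, rfl⟩
  have h2m0 : 0 < 2 * m := by omega
  have ha : (0 : ℕ) < 2 * m := h2m0
  have hblt : 2 * m - 1 < 2 * m := by omega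
  set a : Fin (2 * m) := ⟨0, ha⟩ with hadef
  set b : Fin (2 * m) := ⟨2 * m - 1, hblt⟩ with hbdef
  have hab : a ≠ b := by
    intro h; rw [Fin.ext_iff] at h; simp [hadef, hbdef] at h; omega
  -- each convex-combination term is in S
  have hmem : ∀ q1 : ZMod d,
      (α q1 + α (-1 - q1) + ((2 * m - 2 : ℕ) : ℝ) * α 0) ∈ S := by
    intro q1
    refine ⟨fun i => if i = a then q1 else (if i = b then -1 - q1 else 0), ?_, ?_⟩
    · have : ∀ i : Fin (2 * m),
          (if i = a then q1 else (if i = b then -1 - q1 else 0)) =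
          (if i = a then q1 else 0) + (if i = b then -1 - q1 else 0) := by
        intro i
        by_cases h1 : i = a <;> by_cases h2 : i = b <;> simp_all
      simp_rw [this]
      rw [Finset.sum_add_distrib, Finset.sum_ite_eq' Finset.univ a,
        Finset.sum_ite_eq' Finset.univ b]
      simp only [Finset.mem_univ, if_true]
      ring
    · have : ∀ i : Fin (2 * m),
          α (if i = a then q1 else (if i = b then -1 - q1 else 0)) =
          α 0 + (if i = a then α q1 - α 0 else 0) + (if i = b then α (-1 - q1) - α 0 else 0) := by
        intro i
        by_cases h1 : i = a <;> by_cases h2 : i = b <;> simp_all <;> ring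
      simp_rw [this]
      rw [Finset.sum_add_distrib, Finset.sum_add_distrib, Finset.sum_const,
        Finset.sum_ite_eq' Finset.univ a, Finset.sum_ite_eq' Finset.univ b]
      simp only [Finset.card_univ, Fintype.card_fin, Finset.mem_univ, if_true, nsmul_eq_mul]
      have hc : ((2 * m - 2 : ℕ) : ℝ) = ((2 * m : ℕ) : ℝ) - 2 := by
        rw [Nat.cast_sub (by omega)]; norm_num
      rw [hc]; push_cast; ring
  have hle : ∀ q1 : ZMod d,
      α q1 + α (-1 - q1) + ((2 * m - 2 : ℕ) : ℝ) * α 0 ≤ classicalBound d m α :=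
    fun q1 => le_csSup hbdd (hmem q1)
  -- express the value as a convex combination
  have hneg : ∑ q : ZMod d, α (-1 - q) = ∑ q : ZMod d, α q := by
    have := Equiv.sum_comp (Equiv.subLeft (-1 : ZMod d)) α
    simpa [Equiv.subLeft] using this
  have hcomb : chainValue d m α p =
      (1 / d) * ∑ q1 : ZMod d, (α q1 + α (-1 - q1) + ((2 * m - 2 : ℕ) : ℝ) * α 0) := by
    rw [hval]
    rw [Finset.sum_add_distrib, Finset.sum_add_distrib, hneg, Finset.sum_const,
      Finset.card_univ, ZMod.card, nsmul_eq_mul]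
    field_simp
    ring
  rw [hcomb]
  calc (1 / d : ℝ) * ∑ q1 : ZMod d, (α q1 + α (-1 - q1) + ((2 * m - 2 : ℕ) : ℝ) * α 0)
      ≤ (1 / d) * ∑ _q1 : ZMod d, classicalBound d m α := by
        apply mul_le_mul_of_nonneg_left
        · exact Finset.sum_le_sum (fun q1 _ => hle q1)
        · positivity
    _ = classicalBound d m α := by
        rw [Finset.sum_const, Finset.card_univ, ZMod.card, nsmul_eq_mul]
        field_simp
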